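/- (Cayley, even case) Let n ≥ 1 and let A be a 2n × 2n skew-symmetric matrix over ℂ (i.e. Aᵀ = −A). Define the Pfaffian of A by Pf(A) = (1/(2ⁿ · n!)) · ∑_{σ ∈ S_{2n}} sgn(σ) · ∏_{i=1}^{n} A_{σ(2i−1), σ(2i)}, where the sum runs over all permutations σ of {1,…,2n}. Then det(A) = (Pf(A))². -/

import Mathlib

open Finset Matrix

open Equiv Equiv.Perm Finset Matrix

namespace Cayley

noncomputable section

variable {n : ℕ}

lemma pp_lt (n : ℕ) (i : Fin n) : 2 * i.1 < 2 * n := by have := i.isLt; omega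
lemma qq_lt (n : ℕ) (i : Fin n) : 2 * i.1 + 1 < 2 * n := by have := i.isLt; omega
def pp (n : ℕ) (i : Fin n) : Fin (2 * n) := ⟨2 * i.1, pp_lt n i⟩
def qq (n : ℕ) (i : Fin n) : Fin (2 * n) := ⟨2 * i.1 + 1, qq_lt n i⟩

def Spf {R : Type*} [CommRing R] {n : ℕ} (A : Matrix (Fin (2*n)) (Fin (2*n)) R) : R :=
  ∑ σ : Perm (Fin (2*n)), ((sign σ : ℤ) : R) * ∏ i : Fin n, A (σ (pp n i)) (σ (qq n i))

def bilv (A : Matrix (Fin (2*n)) (Fin (2*n)) ℂ) (x y : Fin (2*n) → ℂ) : ℂ :=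
  x ⬝ᵥ A.mulVec y

def Fv (A : Matrix (Fin (2*n)) (Fin (2*n)) ℂ) (v : Fin (2*n) → (Fin (2*n) → ℂ)) : ℂ :=
  ∑ σ : Perm (Fin (2*n)), ((sign σ : ℤ) : ℂ) * ∏ i : Fin n, bilv A (v (σ (pp n i))) (v (σ (qq n i)))

def i0 (σ : Perm (Fin (2*n))) (j : Fin (2*n)) : Fin n :=
  ⟨(σ⁻¹ j).1 / 2, by have := (σ⁻¹ j).isLt; omega⟩

lemma key_prod (A : Matrix (Fin (2*n)) (Fin (2*n)) ℂ) (σ : Perm (Fin (2*n))) (j : Fin (2*n))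
    (v : Fin (2*n) → (Fin (2*n) → ℂ)) (w : Fin (2*n) → ℂ) :
    ∏ i : Fin n, bilv A (Function.update v j w (σ (pp n i))) (Function.update v j w (σ (qq n i)))
      = (if (σ⁻¹ j).1 % 2 = 0 then bilv A w (v (σ (qq n (i0 σ j))))
          else bilv A (v (σ (pp n (i0 σ j)))) w)
        * ∏ i ∈ univ.erase (i0 σ j), bilv A (v (σ (pp n i))) (v (σ (qq n i))) := by
  rw [← Finset.mul_prod_erase univ _ (Finset.mem_univ (i0 σ j))]
  have hmem : ∀ i : Fin n, i ≠ i0 σ j → σ (pp n i) ≠ j ∧ σ (qq n i) ≠ j := by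
    intro i hi
    constructor
    · intro h
      apply hi; apply Fin.ext
      have h2 : pp n i = σ⁻¹ j := by rw [← h, Perm.coe_inv, Equiv.symm_apply_apply]
      have h3 := congrArg Fin.val h2
      simp only [pp, qq, i0] at h3 ⊢
      omega
    · intro h
      apply hi; apply Fin.ext
      have h2 : qq n i = σ⁻¹ j := by rw [← h, Perm.coe_inv, Equiv.symm_apply_apply]
      have h3 := congrArg Fin.val h2
      simp only [pp, qq, i0] at h3 ⊢
      omega
  congr 1
  · by_cases hpar : (σ⁻¹ j).1 % 2 = 0
    · have hp : σ (pp n (i0 σ j)) = j := by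
        have : pp n (i0 σ j) = σ⁻¹ j := by
          apply Fin.ext; simp only [pp, i0]; omega
        rw [this, Perm.coe_inv, Equiv.apply_symm_apply]
      have hq : σ (qq n (i0 σ j)) ≠ j := by
        intro h
        have : qq n (i0 σ j) = σ⁻¹ j := by conv_rhs => rw [← h, Perm.coe_inv, Equiv.symm_apply_apply]
        have h3 := congrArg Fin.val this
        simp only [qq, i0] at h3
        omega
      rw [if_pos hpar, hp, Function.update_self, Function.update_of_ne hq]
    · have hq : σ (qq n (i0 σ j)) = j := by
        have : qq n (i0 σ j) = σ⁻¹ j := by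
          apply Fin.ext; simp only [qq, i0]; omega
        rw [this, Perm.coe_inv, Equiv.apply_symm_apply]
      have hp : σ (pp n (i0 σ j)) ≠ j := by
        intro h
        have : pp n (i0 σ j) = σ⁻¹ j := by conv_rhs => rw [← h, Perm.coe_inv, Equiv.symm_apply_apply]
        have h3 := congrArg Fin.val this
        simp only [pp, i0] at h3
        omega
      rw [if_neg hpar, hq, Function.update_self, Function.update_of_ne hp]
  · apply Finset.prod_congr rfl
    intro i hi
    obtain ⟨h1, h2⟩ := hmem i (Finset.ne_of_mem_erase hi)
    rw [Function.update_of_ne h1, Function.update_of_ne h2]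

lemma bilv_add_left (A) (x y z : Fin (2*n) → ℂ) : bilv A (x + y) z = bilv A x z + bilv A y z := by
  simp [bilv, add_dotProduct]

lemma bilv_add_right (A) (x y z : Fin (2*n) → ℂ) : bilv A x (y + z) = bilv A x y + bilv A x z := by
  simp [bilv, Matrix.mulVec_add, dotProduct_add]

lemma bilv_smul_left (A) (c : ℂ) (x z : Fin (2*n) → ℂ) : bilv A (c • x) z = c * bilv A x z := by
  simp [bilv, smul_dotProduct]

lemma bilv_smul_right (A) (c : ℂ) (x z : Fin (2*n) → ℂ) : bilv A x (c • z) = c * bilv A x z := by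
  simp [bilv, Matrix.mulVec_smul, dotProduct_smul]

def FML (A : Matrix (Fin (2*n)) (Fin (2*n)) ℂ) :
    MultilinearMap ℂ (fun _ : Fin (2*n) => (Fin (2*n) → ℂ)) ℂ where
  toFun := Fv A
  map_update_add' := by
    intro dec v j x y
    obtain rfl := Subsingleton.elim dec (instDecidableEqFin (2*n))
    simp only [Fv, key_prod, ← Finset.sum_add_distrib]
    apply Finset.sum_congr rfl
    intro σ _
    by_cases hpar : (σ⁻¹ j).1 % 2 = 0 <;>
      simp only [hpar, if_true, if_false, bilv_add_left, bilv_add_right] <;> ring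
  map_update_smul' := by
    intro dec v j c x
    obtain rfl := Subsingleton.elim dec (instDecidableEqFin (2*n))
    simp only [Fv, key_prod, smul_eq_mul, Finset.mul_sum]
    apply Finset.sum_congr rfl
    intro σ _
    by_cases hpar : (σ⁻¹ j).1 % 2 = 0 <;>
      simp only [hpar, if_true, if_false, bilv_smul_left, bilv_smul_right] <;> ring

def FAlt (A : Matrix (Fin (2*n)) (Fin (2*n)) ℂ) :
    (Fin (2*n) → ℂ) [⋀^Fin (2*n)]→ₗ[ℂ] ℂ where
  toMultilinearMap := FML A
  map_eq_zero_of_eq' := by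
    intro v a b hv hab
    show Fv A v = 0
    have key : ∀ σ : Perm (Fin (2*n)),
        ((sign (Equiv.swap a b * σ) : ℤ) : ℂ) *
          ∏ i : Fin n, bilv A (v ((Equiv.swap a b * σ) (pp n i))) (v ((Equiv.swap a b * σ) (qq n i)))
        = - (((sign σ : ℤ) : ℂ) * ∏ i : Fin n, bilv A (v (σ (pp n i))) (v (σ (qq n i)))) := by
      intro σ
      have hval : ∀ m : Fin (2*n), v (Equiv.swap a b m) = v m := by
        intro m
        rcases Equiv.swap_apply_def a b m with _
        by_cases h1 : m = a
        · rw [h1, Equiv.swap_apply_left, hv]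
        · by_cases h2 : m = b
          · rw [h2, Equiv.swap_apply_right, hv]
          · rw [Equiv.swap_apply_of_ne_of_ne h1 h2]
      have hsign : sign (Equiv.swap a b * σ) = - sign σ := by
        rw [Equiv.Perm.sign_mul, Equiv.Perm.sign_swap hab, neg_one_mul]
      rw [hsign]
      push_cast
      rw [neg_mul]
      apply neg_inj.mpr
      congr 1
      apply Finset.prod_congr rfl
      intro i _
      simp only [Perm.mul_apply, Function.comp_apply, Equiv.Perm.coe_mul, hval]
    have h1 : Fv A v = ∑ σ : Perm (Fin (2*n)),
        ((sign (Equiv.swap a b * σ) : ℤ) : ℂ) *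
          ∏ i : Fin n, bilv A (v ((Equiv.swap a b * σ) (pp n i))) (v ((Equiv.swap a b * σ) (qq n i))) := by
      exact (Fintype.sum_equiv (Equiv.mulLeft (Equiv.swap a b)) _ _ (fun σ => rfl)).symm
    have h2 : Fv A v = - Fv A v := by
      calc Fv A v = _ := h1
        _ = ∑ σ : Perm (Fin (2*n)), - (((sign σ : ℤ) : ℂ) *
              ∏ i : Fin n, bilv A (v (σ (pp n i))) (v (σ (qq n i)))) :=
          Finset.sum_congr rfl (fun σ _ => key σ)
        _ = - Fv A v := by rw [Finset.sum_neg_distrib]; rfl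
    linear_combination h2 / 2

lemma cov (M A : Matrix (Fin (2*n)) (Fin (2*n)) ℂ) :
    Spf (Mᵀ * A * M) = M.det * Spf A := by
  classical
  have hb := AlternatingMap.eq_smul_basis_det (Pi.basisFun ℂ (Fin (2*n))) (FAlt A)
  have hbv := congrFun (congrArg DFunLike.coe hb) (fun j => (fun k => M k j))
  have hL : Fv A (fun j => (fun k => M k j)) = Spf (Mᵀ * A * M) := by
    unfold Fv Spf
    apply Finset.sum_congr rfl
    intro σ _
    congr 1
    apply Finset.prod_congr rfl
    intro i _
    simp only [bilv, Matrix.mul_apply, Matrix.mulVec, dotProduct, Matrix.transpose_apply,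
      Finset.sum_mul, Finset.mul_sum]
    rw [Finset.sum_comm]
    apply Finset.sum_congr rfl; intro k _
    apply Finset.sum_congr rfl; intro l _
    ring
  have hE : Fv A (⇑(Pi.basisFun ℂ (Fin (2*n)))) = Spf A := by
    unfold Fv Spf
    apply Finset.sum_congr rfl
    intro σ _
    congr 1
    apply Finset.prod_congr rfl
    intro i _
    simp [bilv, Pi.basisFun_apply, Matrix.mulVec_single, single_dotProduct]
  have hD : (Pi.basisFun ℂ (Fin (2*n))).det (fun j => (fun k => M k j)) = M.det := by
    rw [Pi.basisFun_det]
    show (Matrix.of (fun j k => M k j)).det = M.det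
    rw [← Matrix.det_transpose]
    congr 1
  have hcoe : ∀ v, FAlt A v = Fv A v := fun _ => rfl
  rw [hcoe, hL] at hbv
  rw [hbv]
  simp only [AlternatingMap.smul_apply, smul_eq_mul, hcoe, hE, hD]
  ring

def Jmat (n : ℕ) : Matrix (Fin (2*n)) (Fin (2*n)) ℂ := fun a b =>
  if a.1 % 2 = 0 ∧ b.1 = a.1 + 1 then 1 else if b.1 % 2 = 0 ∧ a.1 = b.1 + 1 then -1 else 0

lemma pp_val (i : Fin n) : (pp n i).1 = 2 * i.1 := rfl
lemma qq_val (i : Fin n) : (qq n i).1 = 2 * i.1 + 1 := rfl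

lemma Jmat_pq (i : Fin n) : Jmat n (pp n i) (qq n i) = 1 := by
  unfold Jmat
  rw [if_pos ⟨by rw [pp_val]; omega, by rw [pp_val, qq_val]⟩]

lemma Jmat_qp (i : Fin n) : Jmat n (qq n i) (pp n i) = -1 := by
  unfold Jmat
  rw [if_neg (by rw [qq_val, pp_val]; omega), if_pos ⟨by rw [pp_val]; omega, by rw [pp_val, qq_val]⟩]

lemma Jmat_support {a b : Fin (2*n)} (h : Jmat n a b ≠ 0) :
    (a.1 % 2 = 0 ∧ b.1 = a.1 + 1) ∨ (b.1 % 2 = 0 ∧ a.1 = b.1 + 1) := by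
  unfold Jmat at h
  split_ifs at h with h1 h2
  · exact Or.inl h1
  · exact Or.inr h2
  · exact absurd rfl h

def eq2 (n : ℕ) : Fin n × Fin 2 ≃ Fin (2*n) :=
  finProdFinEquiv.trans (finCongr (Nat.mul_comm n 2))

lemma eq2_val (i : Fin n) (b : Fin 2) : ((eq2 n) (i, b)).1 = b.1 + 2*i.1 := rfl

lemma eq2_p (i : Fin n) : eq2 n (i, 0) = pp n i := by
  apply Fin.ext; rw [eq2_val]; simp [pp]

lemma eq2_q (i : Fin n) : eq2 n (i, 1) = qq n i := by
  apply Fin.ext; rw [eq2_val]; simp [qq]; omega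

lemma eq2_p' (i : Fin n) (b : Fin 2) (hb : b.1 = 0) : eq2 n (i, b) = pp n i := by
  have : b = 0 := Fin.ext hb
  rw [this, eq2_p]

lemma eq2_q' (i : Fin n) (b : Fin 2) (hb : b.1 = 1) : eq2 n (i, b) = qq n i := by
  have : b = 1 := Fin.ext hb
  rw [this, eq2_q]

def phi (ρ : Perm (Fin n)) (ε : Fin n → Bool) : Perm (Fin (2*n)) :=
  (eq2 n).permCongr
    ((Equiv.prodCongrLeft (fun _ : Fin 2 => ρ)) *
      (Equiv.prodCongrRight (fun i => if ε i then Equiv.swap (0 : Fin 2) 1 else 1)))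

lemma phi_apply (ρ : Perm (Fin n)) (ε : Fin n → Bool) (i : Fin n) (b : Fin 2) :
    phi ρ ε (eq2 n (i, b)) = eq2 n (ρ i, (if ε i then Equiv.swap (0 : Fin 2) 1 else 1) b) := by
  simp [phi, Equiv.permCongr_apply, Equiv.prodCongrLeft_apply, Equiv.prodCongrRight_apply]

lemma phi_pp (ρ : Perm (Fin n)) (ε : Fin n → Bool) (i : Fin n) :
    phi ρ ε (pp n i) = if ε i then qq n (ρ i) else pp n (ρ i) := by
  rw [← eq2_p, phi_apply]
  by_cases h : ε i <;> simp [h, eq2_p, eq2_q]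

lemma phi_qq (ρ : Perm (Fin n)) (ε : Fin n → Bool) (i : Fin n) :
    phi ρ ε (qq n i) = if ε i then pp n (ρ i) else qq n (ρ i) := by
  rw [← eq2_q, phi_apply]
  by_cases h : ε i <;> simp [h, eq2_p, eq2_q]

lemma sign_phi (ρ : Perm (Fin n)) (ε : Fin n → Bool) :
    sign (phi ρ ε) = ∏ i : Fin n, (if ε i then (-1 : ℤˣ) else 1) := by
  unfold phi
  rw [Equiv.Perm.sign_permCongr, Equiv.Perm.sign_mul, Equiv.Perm.sign_prodCongrLeft,
    Equiv.Perm.sign_prodCongrRight]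
  have h1 : (∏ _k : Fin 2, sign ρ) = 1 := by
    rw [Finset.prod_const]
    simp [Int.units_sq]
  rw [h1, one_mul]
  apply Finset.prod_congr rfl
  intro i _
  by_cases h : ε i <;> simp [h, Equiv.Perm.sign_swap]

lemma phi_inj : Function.Injective
    (fun p : Perm (Fin n) × (Fin n → Bool) => phi p.1 p.2) := by
  rintro ⟨ρ, ε⟩ ⟨ρ', ε'⟩ h
  simp only at h
  have key : ∀ i : Fin n, ρ i = ρ' i ∧ ε i = ε' i := by
    intro i
    have hx := congrArg (fun σ : Perm (Fin (2*n)) => σ (pp n i)) h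
    simp only [phi_pp] at hx
    cases h1 : ε i <;> cases h2 : ε' i <;> rw [h1, h2] at hx <;> simp only [if_true, if_false,
        Bool.false_eq_true, if_neg, ite_false, ite_true] at hx <;>
      have hv := congrArg Fin.val hx <;> simp only [pp_val, qq_val] at hv <;>
      first
        | exact ⟨Fin.ext (by omega), rfl⟩
        | (exfalso; omega)
  have h1 : ρ = ρ' := Equiv.ext fun x => (key x).1
  have h2 : ε = ε' := funext fun x => (key x).2
  rw [h1, h2]

lemma term_ne_zero {σ : Perm (Fin (2*n))}
    (h : ((sign σ : ℤ) : ℂ) * ∏ i : Fin n, Jmat n (σ (pp n i)) (σ (qq n i)) ≠ 0) :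
    ∃ ρ ε, phi ρ ε = σ := by
  have hJ : ∀ i : Fin n, Jmat n (σ (pp n i)) (σ (qq n i)) ≠ 0 := by
    intro i
    have hprod : (∏ i : Fin n, Jmat n (σ (pp n i)) (σ (qq n i))) ≠ 0 := by
      intro h0; exact h (by rw [h0, mul_zero])
    exact Finset.prod_ne_zero_iff.mp hprod i (Finset.mem_univ i)
  have hcond := fun i => Jmat_support (hJ i)
  have hρb : ∀ i : Fin n, (σ (pp n i)).1 / 2 < n := by
    intro i; have := (σ (pp n i)).isLt; omega
  set ρ0 : Fin n → Fin n := fun i => ⟨(σ (pp n i)).1 / 2, hρb i⟩ with hρ0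
  have hval : ∀ i : Fin n, (σ (qq n i)).1 / 2 = (σ (pp n i)).1 / 2 := by
    intro i
    rcases hcond i with ⟨h1, h2⟩ | ⟨h1, h2⟩ <;> omega
  have hinj : Function.Injective ρ0 := by
    intro i i' hii
    have hv := congrArg Fin.val hii
    simp only [hρ0] at hv
    by_cases hee : (σ (pp n i)).1 = (σ (pp n i')).1
    · have h5 := σ.injective (Fin.ext hee)
      have h6 := congrArg Fin.val h5
      rw [pp_val, pp_val] at h6
      exact Fin.ext (by omega)
    · have hne : (σ (qq n i')).1 ≠ (σ (pp n i')).1 := by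
        intro hh
        have := congrArg Fin.val (σ.injective (Fin.ext hh))
        rw [pp_val, qq_val] at this
        omega
      have hv2 := hval i'
      have hpar : (σ (pp n i)).1 = (σ (qq n i')).1 := by omega
      have := congrArg Fin.val (σ.injective (Fin.ext hpar))
      rw [pp_val, qq_val] at this
      omega
  refine ⟨Equiv.ofBijective ρ0 ((Finite.injective_iff_bijective).1 hinj),
    fun i => decide ((σ (pp n i)).1 % 2 = 1), ?_⟩
  apply Equiv.ext
  intro m
  obtain ⟨⟨i, b⟩, rfl⟩ := (eq2 n).surjective m
  by_cases hb : b.1 = 0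
  case neg =>
    have hb1 : b.1 = 1 := by have := b.isLt; omega
    rw [eq2_q' i b hb1, phi_qq]
    have hq : (σ (qq n i)).1 + 1 = (σ (pp n i)).1 ∨ (σ (qq n i)).1 = (σ (pp n i)).1 + 1 := by
      rcases hcond i with ⟨h1, h2⟩ | ⟨h1, h2⟩ <;> omega
    have hqpar : ∀ x, (σ (pp n x)).1 % 2 = 1 → (σ (qq n x)).1 + 1 = (σ (pp n x)).1 := by
      intro x hx
      rcases hcond x with ⟨h1, h2⟩ | ⟨h1, h2⟩ <;> omega
    have hqpar2 : ∀ x, ¬ (σ (pp n x)).1 % 2 = 1 → (σ (qq n x)).1 = (σ (pp n x)).1 + 1 := by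
      intro x hx
      rcases hcond x with ⟨h1, h2⟩ | ⟨h1, h2⟩ <;> omega
    by_cases hpar : (σ (pp n i)).1 % 2 = 1
    · have h8 := hqpar i hpar
      rw [if_pos (by simp [hpar])]
      apply Fin.ext
      rw [pp_val]
      simp only [Equiv.ofBijective_apply, hρ0]
      omega
    · have h8 := hqpar2 i hpar
      rw [if_neg (by simp [hpar])]
      apply Fin.ext
      rw [qq_val]
      simp only [Equiv.ofBijective_apply, hρ0]
      omega
  case pos =>
    rw [eq2_p' i b hb, phi_pp]
    by_cases hpar : (σ (pp n i)).1 % 2 = 1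
    · rw [if_pos (by simp [hpar])]
      apply Fin.ext
      rw [qq_val]
      simp only [Equiv.ofBijective_apply, hρ0]
      omega
    · rw [if_neg (by simp [hpar])]
      apply Fin.ext
      rw [pp_val]
      simp only [Equiv.ofBijective_apply, hρ0]
      omega

lemma SJ : Spf (Jmat n) = 2^n * (n.factorial : ℂ) := by
  unfold Spf
  have := Finset.sum_bij_ne_zero
    (i := fun (p : Perm (Fin n) × (Fin n → Bool)) _ _ => phi p.1 p.2)
    (s := Finset.univ) (t := Finset.univ)
    (f := fun _ => (1 : ℂ))
    (g := fun σ : Perm (Fin (2*n)) =>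
      ((sign σ : ℤ) : ℂ) * ∏ i : Fin n, Jmat n (σ (pp n i)) (σ (qq n i)))
    (fun _ _ _ => Finset.mem_univ _)
    (fun p _ _ q _ _ h => phi_inj h)
    (fun σ _ hσ => by
      obtain ⟨ρ, ε, hφ⟩ := term_ne_zero hσ
      exact ⟨(ρ, ε), Finset.mem_univ _, one_ne_zero, hφ⟩)
    (fun p _ _ => by
      obtain ⟨ρ, ε⟩ := p
      show (1:ℂ) = ((sign (phi ρ ε) : ℤ) : ℂ) *
        ∏ i : Fin n, Jmat n (phi ρ ε (pp n i)) (phi ρ ε (qq n i))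
      have hsgn : ((sign (phi ρ ε) : ℤ) : ℂ) = ∏ i : Fin n, (if ε i then (-1:ℂ) else 1) := by
        rw [sign_phi]
        rw [show Units.val (∏ i : Fin n, (if ε i then (-1 : ℤˣ) else 1)) =
            ∏ i : Fin n, Units.val (if ε i then (-1 : ℤˣ) else 1) from
          map_prod (Units.coeHom ℤ) _ Finset.univ]
        rw [show ((∏ i : Fin n, Units.val (if ε i then (-1 : ℤˣ) else 1) : ℤ) : ℂ) =
            ∏ i : Fin n, ((Units.val (if ε i then (-1 : ℤˣ) else 1) : ℤ) : ℂ) from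
          map_prod (Int.castRingHom ℂ) _ Finset.univ]
        apply Finset.prod_congr rfl
        intro i _
        cases h : ε i <;> simp [h]
      have hJp : (∏ i : Fin n, Jmat n (phi ρ ε (pp n i)) (phi ρ ε (qq n i)))
          = ∏ i : Fin n, (if ε i then (-1:ℂ) else 1) := by
        apply Finset.prod_congr rfl
        intro i _
        rw [phi_pp, phi_qq]
        by_cases h : ε i <;> simp [h, Jmat_pq, Jmat_qp]
      rw [hsgn, hJp, ← Finset.prod_mul_distrib]
      symm
      rw [Finset.prod_eq_one]
      intro i _
      by_cases h : ε i <;> simp [h])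
  rw [← this]
  rw [Finset.sum_const, card_univ, Fintype.card_prod, Fintype.card_perm, Fintype.card_fun]
  simp [Fintype.card_fin, Fintype.card_bool, mul_comm]

def S2 : Matrix (Fin 2) (Fin 2) ℂ := !![0, 1; -1, 0]

lemma S2_mul_S2 : S2 * S2 = -1 := by
  ext i j
  fin_cases i <;> fin_cases j <;>
    simp [S2, Matrix.mul_apply, Fin.sum_univ_two, Matrix.one_apply]

lemma S2_transpose : S2ᵀ = -S2 := by
  ext i j
  fin_cases i <;> fin_cases j <;> simp [S2]

lemma S2_det : S2.det = 1 := by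
  simp [S2, Matrix.det_fin_two]

def esum (n : ℕ) : Fin 2 ⊕ Fin (2*n) ≃ Fin (2*(n+1)) :=
  finSumFinEquiv.trans (finCongr (by omega))

lemma esum_inl_val (s : Fin 2) : (esum n (Sum.inl s)).1 = s.1 := rfl
lemma esum_inr_val (k : Fin (2*n)) : (esum n (Sum.inr k)).1 = 2 + k.1 := rfl

lemma S2_apply (s t : Fin 2) :
    S2 s t = if s.1 = 0 ∧ t.1 = 1 then 1 else if t.1 = 0 ∧ s.1 = 1 then -1 else 0 := by
  fin_cases s <;> fin_cases t <;> simp [S2]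

lemma J_block : (Jmat (n+1)).submatrix (esum n) (esum n) = fromBlocks S2 0 0 (Jmat n) := by
  ext a b
  cases a with
  | inl s =>
    cases b with
    | inl t =>
      have hs := s.isLt
      have ht := t.isLt
      simp only [submatrix_apply, fromBlocks_apply₁₁, Jmat, S2_apply]
      rw [esum_inl_val s, esum_inl_val t]
      split_ifs <;> first | rfl | omega
    | inr l =>
      have hs := s.isLt
      simp only [submatrix_apply, fromBlocks_apply₁₂, Jmat,
        Matrix.zero_apply]
      rw [esum_inl_val s, esum_inr_val l]
      split_ifs <;> first | rfl | omega
  | inr k =>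
    cases b with
    | inl t =>
      have ht := t.isLt
      simp only [submatrix_apply, fromBlocks_apply₂₁, Jmat,
        Matrix.zero_apply]
      rw [esum_inr_val k, esum_inl_val t]
      split_ifs <;> first | rfl | omega
    | inr l =>
      simp only [submatrix_apply, fromBlocks_apply₂₂, Jmat]
      rw [esum_inr_val k, esum_inr_val l]
      split_ifs <;> first | rfl | omega

lemma J_eq_submatrix : Jmat (n+1) = (fromBlocks S2 0 0 (Jmat n)).submatrix
    (esum n).symm (esum n).symm := by
  rw [← J_block]
  rw [Matrix.submatrix_submatrix]
  simp [Equiv.self_comp_symm]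

lemma detJ : ∀ n, (Jmat n).det = 1 := by
  intro n
  induction n with
  | zero =>
    haveI : IsEmpty (Fin (2*0)) := by rw [Nat.mul_zero]; infer_instance
    exact Matrix.det_isEmpty
  | succ n IH =>
    rw [J_eq_submatrix, Matrix.det_submatrix_equiv_self, Matrix.det_fromBlocks_zero₁₂,
      S2_det, IH, one_mul]

lemma skew_diag {m : Type*} {A : Matrix m m ℂ} (h : Aᵀ = -A) (i : m) : A i i = 0 := by
  have h2 := congrFun (congrFun h i) i
  simp only [Matrix.transpose_apply, Matrix.neg_apply] at h2
  linear_combination h2 / 2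

def CongTo {ι : Type} [Fintype ι] [DecidableEq ι] (A B : Matrix ι ι ℂ) : Prop :=
  ∃ M : Matrix ι ι ℂ, IsUnit M.det ∧ Mᵀ * A * M = B

lemma congTo_trans {ι : Type} [Fintype ι] [DecidableEq ι] {A B C : Matrix ι ι ℂ}
    (h1 : CongTo A B) (h2 : CongTo B C) : CongTo A C := by
  obtain ⟨M, hM, hMe⟩ := h1
  obtain ⟨N, hN, hNe⟩ := h2
  refine ⟨M * N, by rw [Matrix.det_mul]; exact hM.mul hN, ?_⟩
  rw [Matrix.transpose_mul, ← hNe, ← hMe]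
  simp only [Matrix.mul_assoc]

lemma congTo_det {ι : Type} [Fintype ι] [DecidableEq ι] {A B : Matrix ι ι ℂ}
    (h : CongTo A B) (hA : IsUnit A.det) : IsUnit B.det := by
  obtain ⟨M, hM, rfl⟩ := h
  rw [Matrix.det_mul, Matrix.det_mul, Matrix.det_transpose]
  exact (hM.mul hA).mul hM

lemma congTo_skew {ι : Type} [Fintype ι] [DecidableEq ι] {A B : Matrix ι ι ℂ}
    (h : CongTo A B) (hA : Aᵀ = -A) : Bᵀ = -B := by
  obtain ⟨M, _, rfl⟩ := h
  rw [Matrix.transpose_mul, Matrix.transpose_mul, Matrix.transpose_transpose, hA]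
  simp only [Matrix.neg_mul, Matrix.mul_neg, Matrix.mul_assoc]

lemma cong_perm {ι : Type} [Fintype ι] [DecidableEq ι] (A : Matrix ι ι ℂ) (π : Perm ι) :
    CongTo A (A.submatrix ⇑π ⇑π) := by
  refine ⟨(1 : Matrix ι ι ℂ).submatrix id ⇑π, ?_, ?_⟩
  · have h : ((1 : Matrix ι ι ℂ).submatrix id ⇑π) *
        ((1 : Matrix ι ι ℂ).submatrix ⇑π id) = 1 := by
      have := Matrix.submatrix_mul_equiv (1 : Matrix ι ι ℂ)
        (1 : Matrix ι ι ℂ) (id : ι → ι) π (id : ι → ι)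
      rw [this]
      simp
    have hd : ((1 : Matrix ι ι ℂ).submatrix id ⇑π).det *
        ((1 : Matrix ι ι ℂ).submatrix ⇑π id).det = 1 := by
      rw [← Matrix.det_mul, h, Matrix.det_one]
    exact IsUnit.of_mul_eq_one _ hd
  · have ht : ((1 : Matrix ι ι ℂ).submatrix id ⇑π)ᵀ =
        (1 : Matrix ι ι ℂ).submatrix ⇑π id := by
      rw [Matrix.transpose_submatrix, Matrix.transpose_one]
    rw [ht]
    have h1 : (1 : Matrix ι ι ℂ).submatrix ⇑π id * A =
        A.submatrix ⇑π id := by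
      have := Matrix.submatrix_mul_equiv (1 : Matrix ι ι ℂ) A
        (⇑π) (Equiv.refl ι) (id : ι → ι)
      simp only [Equiv.coe_refl, Matrix.submatrix_id_id] at this
      rw [this, Matrix.one_mul]
    have h2 : A.submatrix ⇑π id * (1 : Matrix ι ι ℂ).submatrix id ⇑π =
        A.submatrix ⇑π ⇑π := by
      have := Matrix.submatrix_mul_equiv A (1 : Matrix ι ι ℂ)
        (⇑π) (Equiv.refl ι) (⇑π)
      simp only [Equiv.coe_refl, Matrix.submatrix_id_id] at this
      rw [this, Matrix.mul_one]
    rw [h1, h2]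

lemma cong_diag {ι : Type} [Fintype ι] [DecidableEq ι] (A : Matrix ι ι ℂ) (d : ι → ℂ) (hd : ∀ i, d i ≠ 0) :
    CongTo A (Matrix.of fun a b => d a * A a b * d b) := by
  refine ⟨Matrix.diagonal d, ?_, ?_⟩
  · rw [Matrix.det_diagonal]
    rw [isUnit_iff_ne_zero]
    exact Finset.prod_ne_zero_iff.mpr (fun i _ => hd i)
  · rw [Matrix.diagonal_transpose]
    ext a b
    simp only [Matrix.mul_diagonal, Matrix.diagonal_mul, Matrix.of_apply]

lemma submatrix_cong_transport {ι κ : Type} [Fintype ι] [DecidableEq ι] [Fintype κ]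
    [DecidableEq κ] (e : κ ≃ ι) {A : Matrix ι ι ℂ}
    {B : Matrix κ κ ℂ} (h : CongTo (A.submatrix ⇑e ⇑e) B) :
    CongTo A (B.submatrix ⇑e.symm ⇑e.symm) := by
  obtain ⟨W, hW, hWe⟩ := h
  refine ⟨W.submatrix ⇑e.symm ⇑e.symm, ?_, ?_⟩
  · rw [Matrix.det_submatrix_equiv_self]
    exact hW
  · have hA : A = (A.submatrix ⇑e ⇑e).submatrix ⇑e.symm ⇑e.symm := by
      rw [Matrix.submatrix_submatrix]
      simp [Equiv.self_comp_symm]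
    rw [Matrix.transpose_submatrix]
    conv_lhs => rw [hA]
    rw [Matrix.submatrix_mul_equiv Wᵀ (A.submatrix ⇑e ⇑e) _ e.symm _,
      Matrix.submatrix_mul_equiv _ W _ e.symm _, hWe]

theorem skew_cong_J : ∀ (n : ℕ) (A : Matrix (Fin (2*n)) (Fin (2*n)) ℂ),
    Aᵀ = -A → IsUnit A.det → CongTo A (Jmat n) := by
  intro n
  induction n with
  | zero =>
    intro A _ _
    exact ⟨1, by simp, by ext i j; exact i.elim0⟩
  | succ n IH =>
    intro A hskew hdet
    -- canonical indices 0 and 1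
    set z : Fin (2*(n+1)) := ⟨0, by omega⟩ with hz
    set o : Fin (2*(n+1)) := ⟨1, by omega⟩ with ho
    have hzo : z ≠ o := by simp [hz, ho, Fin.ext_iff]
    -- find j with A z j ≠ 0
    have hrow : ∃ j, A z j ≠ 0 := by
      by_contra hc
      push_neg at hc
      have h0 : A.det = 0 := Matrix.det_eq_zero_of_row_eq_zero z hc
      rw [h0] at hdet
      simpa using hdet
    obtain ⟨j, hj⟩ := hrow
    have hjz : j ≠ z := by rintro rfl; exact hj (skew_diag hskew z)
    -- Step 1: permute so that the interesting entry is at (z, o)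
    set π := Equiv.swap o j with hπ
    set A₁ := A.submatrix ⇑π ⇑π with hA₁
    have hcong1 : CongTo A A₁ := cong_perm A π
    have hA₁skew : A₁ᵀ = -A₁ := congTo_skew hcong1 hskew
    have hA₁zo : A₁ z o ≠ 0 := by
      have hπz : π z = z := Equiv.swap_apply_of_ne_of_ne hzo (Ne.symm hjz)
      have hπo : π o = j := Equiv.swap_apply_left o j
      simpa [hA₁, Matrix.submatrix_apply, hπz, hπo] using hj
    -- Step 2: scale column o
    set c := (A₁ z o)⁻¹ with hc
    set d : Fin (2*(n+1)) → ℂ := fun k => if k = o then c else 1 with hd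
    have hdne : ∀ i, d i ≠ 0 := by
      intro i
      by_cases h : i = o <;> simp [hd, h, hc, inv_ne_zero hA₁zo]
    set A₂ := Matrix.of fun a b => d a * A₁ a b * d b with hA₂
    have hcong2 : CongTo A₁ A₂ := cong_diag A₁ d hdne
    have hA₂skew : A₂ᵀ = -A₂ := congTo_skew hcong2 hA₁skew
    have hA₂zo : A₂ z o = 1 := by
      have h1 : d z = 1 := by simp [hd, hzo]
      have h2 : d o = c := by simp [hd]
      show d z * A₁ z o * d o = 1
      rw [h1, h2, one_mul, hc]
      exact mul_inv_cancel₀ hA₁zo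
    have hA₂oz : A₂ o z = -1 := by
      have h := congrFun (congrFun hA₂skew o) z
      simp only [Matrix.transpose_apply, Matrix.neg_apply] at h
      linear_combination h - hA₂zo
    -- block decomposition
    set e := esum n with he
    set Ah := A₂.submatrix ⇑e ⇑e with hAh
    have hAhskew : Ahᵀ = -Ah := by
      rw [hAh, Matrix.transpose_submatrix, hA₂skew]
      ext a b
      simp [Matrix.submatrix_apply]
    set B := Ah.toBlocks₁₂ with hB
    set D := Ah.toBlocks₂₂ with hDdef
    have h0i : ∀ (h : (0:ℕ) < 2), e (Sum.inl ⟨0, h⟩) = z := fun _ => Fin.ext rfl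
    have h1i : ∀ (h : (1:ℕ) < 2), e (Sum.inl ⟨1, h⟩) = o := fun _ => Fin.ext rfl
    have hS : Ah.toBlocks₁₁ = S2 := by
      ext s t
      show Ah (Sum.inl s) (Sum.inl t) = S2 s t
      rw [hAh, Matrix.submatrix_apply]
      rcases s with ⟨sv, hsv⟩
      rcases t with ⟨tv, htv⟩
      interval_cases sv <;> interval_cases tv
      · simp only [h0i, h1i]
        rw [show S2 ⟨0,hsv⟩ ⟨0,htv⟩ = 0 by rw [S2_apply]; norm_num]
        exact skew_diag hA₂skew z
      · simp only [h0i, h1i]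
        rw [show S2 ⟨0,hsv⟩ ⟨1,htv⟩ = 1 by rw [S2_apply]; norm_num]
        exact hA₂zo
      · simp only [h0i, h1i]
        rw [show S2 ⟨1,hsv⟩ ⟨0,htv⟩ = -1 by rw [S2_apply]; norm_num]
        exact hA₂oz
      · simp only [h0i, h1i]
        rw [show S2 ⟨1,hsv⟩ ⟨1,htv⟩ = 0 by rw [S2_apply]; norm_num]
        exact skew_diag hA₂skew o
    have hCblock : Ah.toBlocks₂₁ = -Bᵀ := by
      ext k s
      have h := congrFun (congrFun hAhskew (Sum.inl s)) (Sum.inr k)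
      simp only [Matrix.transpose_apply, Matrix.neg_apply] at h
      show Ah (Sum.inr k) (Sum.inl s) = -(Bᵀ k s)
      rw [hB]
      show Ah (Sum.inr k) (Sum.inl s) = -(Ah (Sum.inl s) (Sum.inr k))
      exact h
    have hDskew : Dᵀ = -D := by
      ext k l
      have h := congrFun (congrFun hAhskew (Sum.inr k)) (Sum.inr l)
      simp only [Matrix.transpose_apply, Matrix.neg_apply] at h
      show Ah (Sum.inr l) (Sum.inr k) = -(Ah (Sum.inr k) (Sum.inr l))
      exact h
    have hAheq : Ah = fromBlocks S2 B (-Bᵀ) D := by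
      rw [← hS, ← hCblock, hB, hDdef, Matrix.fromBlocks_toBlocks]
    set Y := S2 * B with hY
    have hTR : S2 * Y + B = 0 := by
      rw [hY, ← Matrix.mul_assoc, S2_mul_S2]
      simp
    have hBL : Yᵀ * S2 + -Bᵀ = 0 := by
      rw [hY, Matrix.transpose_mul, Matrix.mul_assoc, S2_transpose, Matrix.neg_mul, S2_mul_S2,
        neg_neg, Matrix.mul_one]
      simp
    set D' := Yᵀ * B + D with hD'
    have hmain : (fromBlocks 1 Y 0 1 : Matrix (Fin 2 ⊕ Fin (2*n)) (Fin 2 ⊕ Fin (2*n)) ℂ)ᵀ * Ah *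
        (fromBlocks 1 Y 0 1) = fromBlocks S2 0 0 D' := by
      have hET : (fromBlocks 1 Y 0 1 : Matrix (Fin 2 ⊕ Fin (2*n)) (Fin 2 ⊕ Fin (2*n)) ℂ)ᵀ
          = fromBlocks 1 0 Yᵀ 1 := by
        rw [Matrix.fromBlocks_transpose, Matrix.transpose_one, Matrix.transpose_one,
          Matrix.transpose_zero]
      rw [hET, hAheq, Matrix.fromBlocks_multiply, Matrix.fromBlocks_multiply]
      simp only [Matrix.one_mul, Matrix.mul_one, Matrix.zero_mul, Matrix.mul_zero,
        add_zero, zero_add]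
      rw [hTR, hBL, Matrix.zero_mul, zero_add]
    have hcong3 : CongTo Ah (fromBlocks S2 0 0 D') :=
      ⟨fromBlocks 1 Y 0 1, by rw [Matrix.det_fromBlocks_zero₂₁]; simp, hmain⟩
    have hdet2 : IsUnit A₂.det := congTo_det (congTo_trans hcong1 hcong2) hdet
    have hdetAh : IsUnit Ah.det := by rw [hAh, Matrix.det_submatrix_equiv_self]; exact hdet2
    have hdetblocks : IsUnit (fromBlocks S2 0 0 D').det := congTo_det hcong3 hdetAh
    have hdetD' : IsUnit D'.det := by
      rw [Matrix.det_fromBlocks_zero₁₂, S2_det, one_mul] at hdetblocks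
      exact hdetblocks
    have h2 : Bᵀ * Y = -(Yᵀ * B) := by
      rw [hY]
      calc Bᵀ * (S2 * B) = (Bᵀ * S2) * B := by rw [Matrix.mul_assoc]
        _ = -((-(Bᵀ * S2)) * B) := by rw [Matrix.neg_mul, neg_neg]
        _ = -((Bᵀ * (-S2)) * B) := by rw [Matrix.mul_neg]
        _ = -((Bᵀ * S2ᵀ) * B) := by rw [S2_transpose]
        _ = -((S2 * B)ᵀ * B) := by rw [Matrix.transpose_mul]
    have hD'skew : D'ᵀ = -D' := by
      rw [hD', Matrix.transpose_add, Matrix.transpose_mul, Matrix.transpose_transpose,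
        hDskew, h2, ← neg_add]
    obtain ⟨Nmat, hNu, hNe⟩ := IH D' hD'skew hdetD'
    have hcong4 : CongTo (fromBlocks S2 0 0 D') ((Jmat (n+1)).submatrix ⇑e ⇑e) := by
      refine ⟨fromBlocks 1 0 0 Nmat, ?_, ?_⟩
      · rw [Matrix.det_fromBlocks_zero₂₁, Matrix.det_one, one_mul]; exact hNu
      · have hFT : (fromBlocks 1 0 0 Nmat : Matrix (Fin 2 ⊕ Fin (2*n)) (Fin 2 ⊕ Fin (2*n)) ℂ)ᵀ
            = fromBlocks 1 0 0 Nmatᵀ := by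
          rw [Matrix.fromBlocks_transpose, Matrix.transpose_one, Matrix.transpose_zero,
            Matrix.transpose_zero]
        rw [hFT, Matrix.fromBlocks_multiply, Matrix.fromBlocks_multiply]
        simp only [Matrix.one_mul, Matrix.mul_one, Matrix.zero_mul, Matrix.mul_zero,
          add_zero, zero_add]
        rw [hNe]
        exact J_block.symm
    have h6 := submatrix_cong_transport e (congTo_trans hcong3 hcong4)
    have h7 : ((Jmat (n+1)).submatrix ⇑e ⇑e).submatrix ⇑e.symm ⇑e.symm = Jmat (n+1) := by
      rw [Matrix.submatrix_submatrix]
      simp [Equiv.self_comp_symm]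
    rw [h7] at h6
    exact congTo_trans (congTo_trans hcong1 hcong2) h6

lemma Spf_map {R S : Type*} [CommRing R] [CommRing S] (f : R →+* S)
    (A : Matrix (Fin (2*n)) (Fin (2*n)) R) : f (Spf A) = Spf (A.map f) := by
  unfold Spf
  rw [map_sum]
  apply Finset.sum_congr rfl
  intro σ _
  rw [_root_.map_mul, map_intCast, map_prod]
  apply congrArg
  apply Finset.prod_congr rfl
  intro i _
  rw [Matrix.map_apply]

lemma Jmat_skew : (Jmat n)ᵀ = -(Jmat n) := by
  ext a b
  simp only [Matrix.transpose_apply, Matrix.neg_apply, Jmat]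
  split_ifs with h1 h2 <;> try omega
  all_goals norm_num

theorem main_inv (A : Matrix (Fin (2*n)) (Fin (2*n)) ℂ) (hskew : Aᵀ = -A)
    (hdet : IsUnit A.det) :
    Spf A ^ 2 = (2^n * (n.factorial : ℂ))^2 * A.det := by
  obtain ⟨M, hMu, hMe⟩ := skew_cong_J n A hskew hdet
  have h1 : Spf (Mᵀ * A * M) = M.det * Spf A := cov M A
  rw [hMe, SJ] at h1
  have hdet1 : M.det * A.det * M.det = 1 := by
    have h2 := congrArg Matrix.det hMe
    rw [Matrix.det_mul, Matrix.det_mul, Matrix.det_transpose, detJ] at h2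
    exact h2
  linear_combination (-(Spf A)^2) * hdet1 -
    (A.det * (M.det * Spf A + (2^n * (n.factorial : ℂ)))) * h1

lemma eval_matrix_det {m : ℕ} (t : ℂ) (P : Matrix (Fin m) (Fin m) (Polynomial ℂ)) :
    (P.det).eval t = (P.map (Polynomial.eval t)).det := by
  have := RingHom.map_det (Polynomial.evalRingHom t) P
  simpa using this

theorem main_all (A : Matrix (Fin (2*n)) (Fin (2*n)) ℂ) (hskew : Aᵀ = -A) :
    Spf A ^ 2 = (2^n * (n.factorial : ℂ))^2 * A.det := by
  classical
  set J := Jmat n with hJ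
  set Ap : Matrix (Fin (2*n)) (Fin (2*n)) (Polynomial ℂ) :=
    A.map Polynomial.C + (Polynomial.X : Polynomial ℂ) • J.map Polynomial.C with hApdef
  have hev : ∀ t : ℂ, Ap.map (Polynomial.eval t) = A + t • J := by
    intro t
    ext i j
    simp only [hApdef, Matrix.map_apply, Matrix.add_apply, Matrix.smul_apply,
      Polynomial.eval_add, Polynomial.eval_mul, Polynomial.eval_X, Polynomial.eval_C, smul_eq_mul]
  set c : Polynomial ℂ := Polynomial.C ((2:ℂ)^n * (n.factorial : ℂ)) with hcdef
  set p : Polynomial ℂ := Spf Ap ^ 2 - c^2 * Ap.det with hpdef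
  have hpev : ∀ t : ℂ, p.eval t =
      Spf (A + t • J) ^ 2 - ((2:ℂ)^n * (n.factorial : ℂ))^2 * (A + t • J).det := by
    intro t
    rw [hpdef]
    simp only [Polynomial.eval_sub, Polynomial.eval_mul, Polynomial.eval_pow,
      Polynomial.eval_C, hcdef]
    rw [eval_matrix_det, hev]
    have hs := Spf_map (Polynomial.evalRingHom t) Ap
    simp only [Polynomial.coe_evalRingHom] at hs
    rw [hs, hev]
  have hskewt : ∀ t : ℂ, (A + t • J)ᵀ = -(A + t • J) := by
    intro t
    rw [Matrix.transpose_add, Matrix.transpose_smul, hskew, hJ, Jmat_skew]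
    rw [smul_neg, neg_add_rev]
    exact add_comm _ _
  have hroot : ∀ t : ℂ, IsUnit (A + t • J).det → p.IsRoot t := by
    intro t ht
    rw [Polynomial.IsRoot, hpev]
    have := main_inv (A + t • J) (hskewt t) ht
    linear_combination this
  -- infinitude of good t
  set r : Polynomial ℂ := (J.map Polynomial.C + (Polynomial.X : Polynomial ℂ) • A.map Polynomial.C).det with hrdef
  have hrev : ∀ u : ℂ, r.eval u = (J + u • A).det := by
    intro u
    rw [hrdef, eval_matrix_det]
    congr 1
    ext i j
    simp only [Matrix.map_apply, Matrix.add_apply, Matrix.smul_apply,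
      Polynomial.eval_add, Polynomial.eval_mul, Polynomial.eval_X, Polynomial.eval_C, smul_eq_mul]
  have hr0 : r.eval 0 = 1 := by
    rw [hrev]
    simp [hJ, detJ]
  have hrne : r ≠ 0 := by
    intro h
    rw [h] at hr0
    simp at hr0
  have hgood : ∀ u : ℂ, u ≠ 0 → ¬ r.IsRoot u → IsUnit (A + u⁻¹ • J).det := by
    intro u hu hru
    have heq : A + u⁻¹ • J = u⁻¹ • (J + u • A) := by
      rw [smul_add, smul_smul, inv_mul_cancel₀ hu, one_smul, add_comm]
    rw [heq, Matrix.det_smul]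
    rw [isUnit_iff_ne_zero]
    apply mul_ne_zero
    · exact pow_ne_zero _ (inv_ne_zero hu)
    · rw [← hrev]
      exact hru
  have hinf : {t : ℂ | p.IsRoot t}.Infinite := by
    have hsub : (fun u : ℂ => u⁻¹) '' {u : ℂ | u ≠ 0 ∧ ¬ r.IsRoot u} ⊆ {t : ℂ | p.IsRoot t} := by
      rintro t ⟨u, ⟨hu, hru⟩, rfl⟩
      exact hroot _ (hgood u hu hru)
    apply Set.Infinite.mono hsub
    apply Set.Infinite.image
    · exact inv_injective.injOn
    · have : {u : ℂ | u ≠ 0 ∧ ¬ r.IsRoot u} = ({0} ∪ {u : ℂ | r.IsRoot u})ᶜ := by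
        ext u
        simp only [Set.mem_setOf_eq, Set.mem_compl_iff, Set.mem_union, Set.mem_singleton_iff,
          not_or]
      rw [this]
      apply Set.Finite.infinite_compl
      exact (Set.finite_singleton 0).union (Polynomial.finite_setOf_isRoot hrne)
  have hp0 : p = 0 := by
    by_contra hp
    exact hinf (Polynomial.finite_setOf_isRoot hp)
  have := hpev 0
  rw [hp0] at this
  simp only [Polynomial.eval_zero] at this
  have hA0 : A + (0:ℂ) • J = A := by simp
  rw [hA0] at this
  linear_combination -this

end

end Cayley


/-- Cayley's theorem, even case: the determinant of a `2n × 2n` skew-symmetric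
complex matrix is the square of its Pfaffian, where the Pfaffian is given by
`Pf(A) = (1/(2^n n!)) ∑_{σ ∈ S_{2n}} sgn(σ) ∏_{i=1}^{n} A_{σ(2i-1), σ(2i)}`. -/
theorem det_skew_eq_pfaffian_sq (n : ℕ) (hn : 1 ≤ n)
    (A : Matrix (Fin (2 * n)) (Fin (2 * n)) ℂ) (hA : Aᵀ = -A) :
    A.det =
      ((1 / (2 ^ n * (n.factorial : ℂ))) *
        ∑ σ : Equiv.Perm (Fin (2 * n)), ((Equiv.Perm.sign σ : ℤ) : ℂ) *
          ∏ i : Fin n,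
            A (σ ⟨2 * i.1, by have := i.isLt; omega⟩)
              (σ ⟨2 * i.1 + 1, by have := i.isLt; omega⟩)) ^ 2 := by
  have hsum : (∑ σ : Equiv.Perm (Fin (2 * n)), ((Equiv.Perm.sign σ : ℤ) : ℂ) *
      ∏ i : Fin n,
        A (σ ⟨2 * i.1, by have := i.isLt; omega⟩)
          (σ ⟨2 * i.1 + 1, by have := i.isLt; omega⟩)) = Cayley.Spf A := rfl
  rw [hsum]
  have hmain := Cayley.main_all A hA
  have hc : (2:ℂ)^n * (n.factorial : ℂ) ≠ 0 := by
    apply mul_ne_zero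
    · exact pow_ne_zero _ two_ne_zero
    · exact_mod_cast Nat.cast_ne_zero.mpr n.factorial_ne_zero
  field_simp [Nat.cast_ne_zero.mpr n.factorial_ne_zero]
  linear_combination -hmain
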